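/- Let d₁,…,dₙ be natural numbers with m = Σᵢ dᵢ, and let x₁,…,xₙ be natural numbers with 0 ≤ xᵢ ≤ dᵢ for each i and Σᵢ xᵢ = k. Then 0 ≤ Σᵢ (dᵢ - xᵢ)·(log₂ dᵢ − log₂(dᵢ - xᵢ)) ≤ k / ln 2, where terms with dᵢ = 0 or dᵢ = xᵢ are interpreted as 0. -/

import Mathlib

lemma aux_term_bound (x d : ℕ) (h : x ≤ d) :
    0 ≤ ((d : ℝ) - x) * (Real.logb 2 d - Real.logb 2 ((d : ℝ) - x)) ∧
    ((d : ℝ) - x) * (Real.logb 2 d - Real.logb 2 ((d : ℝ) - x)) ≤ x / Real.log 2 := by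
  have hlog2 : (0 : ℝ) < Real.log 2 := Real.log_pos (by norm_num)
  rcases eq_or_lt_of_le h with rfl | hlt
  · simp [div_nonneg, hlog2.le]
  · have ha : (0 : ℝ) < (d : ℝ) - x := by
      have : (x : ℝ) < d := by exact_mod_cast hlt
      linarith
    have hd : (0 : ℝ) < d := lt_of_lt_of_le ha (by linarith [Nat.cast_nonneg (α := ℝ) x])
    have hle : (d : ℝ) - x ≤ d := by linarith [Nat.cast_nonneg (α := ℝ) x]
    constructor
    · apply mul_nonneg ha.le
      have := Real.logb_le_logb_of_le (by norm_num : (1:ℝ) < 2) ha hle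
      linarith
    · have hlogle : Real.log ((d : ℝ) / ((d : ℝ) - x)) ≤ (d : ℝ) / ((d : ℝ) - x) - 1 :=
        Real.log_le_sub_one_of_pos (div_pos hd ha)
      have hsplit : Real.log ((d : ℝ) / ((d : ℝ) - x)) = Real.log d - Real.log ((d : ℝ) - x) :=
        Real.log_div hd.ne' ha.ne'
      have key : ((d : ℝ) - x) * (Real.log d - Real.log ((d : ℝ) - x)) ≤ x := by
        rw [← hsplit]
        calc ((d : ℝ) - x) * Real.log ((d : ℝ) / ((d : ℝ) - x))
            ≤ ((d : ℝ) - x) * ((d : ℝ) / ((d : ℝ) - x) - 1) :=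
              mul_le_mul_of_nonneg_left hlogle ha.le
          _ = x := by field_simp; ring
      rw [Real.logb, Real.logb, div_sub_div_same, ← mul_div_assoc,
        div_le_div_iff_of_pos_right hlog2]
      exact key

theorem sum_simple_bound (n k : ℕ) (d x : Fin n → ℕ)
    (hxd : ∀ i, x i ≤ d i) (hk : ∑ i, x i = k) :
    0 ≤ ∑ i, ((d i : ℝ) - x i) * (Real.logb 2 (d i) - Real.logb 2 ((d i : ℝ) - x i)) ∧
    ∑ i, ((d i : ℝ) - x i) * (Real.logb 2 (d i) - Real.logb 2 ((d i : ℝ) - x i))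
      ≤ k / Real.log 2 := by
  constructor
  · exact Finset.sum_nonneg fun i _ => (aux_term_bound (x i) (d i) (hxd i)).1
  · calc ∑ i, ((d i : ℝ) - x i) * (Real.logb 2 (d i) - Real.logb 2 ((d i : ℝ) - x i))
        ≤ ∑ i, (x i : ℝ) / Real.log 2 :=
          Finset.sum_le_sum fun i _ => (aux_term_bound (x i) (d i) (hxd i)).2
      _ = k / Real.log 2 := by
          rw [← Finset.sum_div, ← Nat.cast_sum, hk]
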